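/- arXiv:1404.6957 — 2 statements merged into one kernel-verified Lean document; each statement's English description precedes it below -/
import Mathlib

section
/- For all n, m ∈ ℤ with n ≠ m, the eigenvectors Φ_n = (φ_n, λ_n φ_n) and Φ_m = (φ_m, λ_m φ_m), with φ_n(y) = cos((6−8n)y), are orthogonal with respect to the inner product ⟨(q₁,q₂),(p₁,p₂)⟩ = ∫₀^{π/4} q₁'(y)p₁'(y) dy + ∫₀^{π/4} q₁(y)p₁(y) dy + ∫₀^{π/4} q₂(y)p₂(y) dy; explicitly, λ_n λ_m ∫₀^{π/4} sin(λ_n y) sin(λ_m y) dy + (1 + λ_n λ_m) ∫₀^{π/4} cos(λ_n y) cos(λ_m y) dy = 0. -/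
open Real intervalIntegral

lemma cos_int_integral (j : ℤ) (hj : j ≠ 0) :
    ∫ y in (0:ℝ)..(π/4), Real.cos ((4*(j:ℝ)) * y) = 0 := by
  have h4 : (4*(j:ℝ)) ≠ 0 := by
    have : (j:ℝ) ≠ 0 := Int.cast_ne_zero.mpr hj
    positivity
  rw [intervalIntegral.integral_comp_mul_left Real.cos h4, integral_cos]
  have : 4*(j:ℝ) * (π/4) = j * π := by ring
  simp [this, Real.sin_int_mul_pi]

lemma integrable_cos_mul (c : ℝ) : IntervalIntegrable (fun y => Real.cos (c*y))
    MeasureTheory.volume (0:ℝ) (π/4) :=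
  (Real.continuous_cos.comp (continuous_const.mul continuous_id)).intervalIntegrable _ _

/-- For `n ≠ m`, the eigenvectors `Φ_n = (φ_n, λ_n φ_n)` and `Φ_m = (φ_m, λ_m φ_m)`,
with `φ_n(y) = cos(λ_n y)`, `λ_n = 6−8n`, are orthogonal in
`X = H¹(0,π/4) × L²(0,π/4)`:
`λ_n λ_m ∫₀^{π/4} sin(λ_n y) sin(λ_m y) dy
  + (1 + λ_n λ_m) ∫₀^{π/4} cos(λ_n y) cos(λ_m y) dy = 0`. -/
theorem stmt5 (n m : ℤ) (hnm : n ≠ m) :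
    ((6:ℝ) - 8*(n:ℝ)) * ((6:ℝ) - 8*(m:ℝ)) *
        (∫ y in (0:ℝ)..(π/4),
          Real.sin (((6:ℝ) - 8*(n:ℝ)) * y) * Real.sin (((6:ℝ) - 8*(m:ℝ)) * y))
      + (1 + ((6:ℝ) - 8*(n:ℝ)) * ((6:ℝ) - 8*(m:ℝ))) *
        (∫ y in (0:ℝ)..(π/4),
          Real.cos (((6:ℝ) - 8*(n:ℝ)) * y) * Real.cos (((6:ℝ) - 8*(m:ℝ)) * y)) = 0 := by
  set a : ℝ := (6:ℝ) - 8*(n:ℝ) with ha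
  set b : ℝ := (6:ℝ) - 8*(m:ℝ) with hb
  have hd : a - b = 4 * ((2*(m-n) : ℤ) : ℝ) := by push_cast; ring
  have hs : a + b = 4 * ((3 - 2*(n+m) : ℤ) : ℝ) := by push_cast; ring
  have hd0 : (2*(m-n) : ℤ) ≠ 0 := by omega
  have hs0 : (3 - 2*(n+m) : ℤ) ≠ 0 := by omega
  have Id : ∫ y in (0:ℝ)..(π/4), Real.cos ((a-b)*y) = 0 := by
    rw [hd]; exact cos_int_integral _ hd0
  have Is : ∫ y in (0:ℝ)..(π/4), Real.cos ((a+b)*y) = 0 := by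
    rw [hs]; exact cos_int_integral _ hs0
  have I1 : ∫ y in (0:ℝ)..(π/4), Real.sin (a*y) * Real.sin (b*y) = 0 := by
    have heq : ∀ y ∈ Set.uIcc (0:ℝ) (π/4),
        Real.sin (a*y) * Real.sin (b*y)
          = (Real.cos ((a-b)*y) - Real.cos ((a+b)*y)) / 2 := by
      intro y _
      have h1 := Real.cos_sub (a*y) (b*y)
      have h2 := Real.cos_add (a*y) (b*y)
      have e1 : (a-b)*y = a*y - b*y := by ring
      have e2 : (a+b)*y = a*y + b*y := by ring
      rw [e1, e2, h1, h2]; ring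
    rw [intervalIntegral.integral_congr heq, intervalIntegral.integral_div,
      intervalIntegral.integral_sub (integrable_cos_mul _) (integrable_cos_mul _),
      Id, Is]
    norm_num
  have I2 : ∫ y in (0:ℝ)..(π/4), Real.cos (a*y) * Real.cos (b*y) = 0 := by
    have heq : ∀ y ∈ Set.uIcc (0:ℝ) (π/4),
        Real.cos (a*y) * Real.cos (b*y)
          = (Real.cos ((a-b)*y) + Real.cos ((a+b)*y)) / 2 := by
      intro y _
      have h1 := Real.cos_sub (a*y) (b*y)
      have h2 := Real.cos_add (a*y) (b*y)
      have e1 : (a-b)*y = a*y - b*y := by ring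
      have e2 : (a+b)*y = a*y + b*y := by ring
      rw [e1, e2, h1, h2]; ring
    rw [intervalIntegral.integral_congr heq, intervalIntegral.integral_div,
      intervalIntegral.integral_add (integrable_cos_mul _) (integrable_cos_mul _),
      Id, Is]
    norm_num
  rw [I1, I2]; ring
end

section
/- Let H be a real or complex Hilbert space, a > 0, ω > 0, and let (e_m)_{m ≥ 1} be a sequence of differentiable functions e_m : [0, a] → H satisfying Re⟨e_m'(x), e_m(x)⟩ ≤ −ω·‖e_m(x)‖² for all x ∈ [0, a], and the concatenation condition e_m(0) = e_{m−1}(a) for all m ≥ 2. Then ‖e_m(a)‖ ≤ e^{−mωa}·‖e₁(0)‖ for every m ≥ 1; in particular e_m(a) → 0 in H as m → ∞. (This is the asymptotic convergence, over iterations of the space-like variable, of the iterative observer's state estimation error to zero.) -/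
open Real Filter

lemma pass_decay {𝕜 : Type*} [RCLike 𝕜] {H : Type*} [NormedAddCommGroup H]
    [InnerProductSpace 𝕜 H] [NormedSpace ℝ H] [IsScalarTower ℝ 𝕜 H]
    (a ω : ℝ) (ha : 0 < a) (f f' : ℝ → H)
    (hd : ∀ x ∈ Set.Icc (0:ℝ) a, HasDerivWithinAt f (f' x) (Set.Icc 0 a) x)
    (hdiss : ∀ x ∈ Set.Icc (0:ℝ) a,
      RCLike.re (inner 𝕜 (f' x) (f x) : 𝕜) ≤ -ω * ‖f x‖^2) :
    ‖f a‖ ≤ Real.exp (-ω * a) * ‖f 0‖ := by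
  set g : ℝ → ℝ := fun x => Real.exp (2*ω*x) * ‖f x‖^2 with hg
  have hφ : ∀ x ∈ Set.Ioo (0:ℝ) a, HasDerivAt g
      (Real.exp (2*ω*x) * (2*ω*‖f x‖^2 + 2 * RCLike.re (inner 𝕜 (f' x) (f x) : 𝕜))) x := by
    intro x hx
    have hmem : Set.Icc (0:ℝ) a ∈ nhds x := Icc_mem_nhds hx.1 hx.2
    have hfd : HasDerivAt f (f' x) x := (hd x (Set.Ioo_subset_Icc_self hx)).hasDerivAt hmem
    have hinner : HasDerivAt (fun t => (inner 𝕜 (f t) (f t) : 𝕜))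
        (inner 𝕜 (f x) (f' x) + inner 𝕜 (f' x) (f x)) x := hfd.inner 𝕜 hfd
    have hre : HasDerivAt (fun t => RCLike.re (inner 𝕜 (f t) (f t) : 𝕜))
        (RCLike.re ((inner 𝕜 (f x) (f' x) : 𝕜) + inner 𝕜 (f' x) (f x))) x := by
      have := RCLike.reCLM.hasFDerivAt.comp_hasDerivAt x hinner
      simpa only [Function.comp_def, RCLike.reCLM_apply] using this
    have hsq : ∀ t, RCLike.re (inner 𝕜 (f t) (f t) : 𝕜) = ‖f t‖^2 := fun t =>
      inner_self_eq_norm_sq (𝕜 := 𝕜) (f t)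
    have hre2 : HasDerivAt (fun t => ‖f t‖^2)
        (2 * RCLike.re (inner 𝕜 (f' x) (f x) : 𝕜)) x := by
      have : RCLike.re ((inner 𝕜 (f x) (f' x) : 𝕜) + inner 𝕜 (f' x) (f x))
          = 2 * RCLike.re (inner 𝕜 (f' x) (f x) : 𝕜) := by
        rw [map_add, inner_re_symm]; ring
      rw [← this]
      exact hre.congr_of_eventuallyEq (by filter_upwards with t using (hsq t).symm)
    have hexp : HasDerivAt (fun t => Real.exp (2*ω*t)) (2*ω*Real.exp (2*ω*x)) x := by
      have := (Real.hasDerivAt_exp (2*ω*x)).comp x ((hasDerivAt_id x).const_mul (2*ω))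
      simpa only [Function.comp_def, mul_comm, one_mul, mul_one] using this
    have := hexp.fun_mul hre2
    exact this.congr_deriv (by ring)
  have hcont : ContinuousOn g (Set.Icc 0 a) := by
    have : ContinuousOn f (Set.Icc 0 a) := fun x hx => (hd x hx).continuousWithinAt
    exact (Real.continuous_exp.comp (continuous_const.mul continuous_id)).continuousOn.mul
      ((this.norm).pow 2)
  have hanti : AntitoneOn g (Set.Icc 0 a) := by
    apply antitoneOn_of_deriv_nonpos (convex_Icc 0 a) hcont
    · intro x hx
      rw [interior_Icc] at hx
      exact (hφ x hx).differentiableAt.differentiableWithinAt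
    · intro x hx
      rw [interior_Icc] at hx
      rw [(hφ x hx).deriv]
      have h1 := hdiss x (Set.Ioo_subset_Icc_self hx)
      have : 2*ω*‖f x‖^2 + 2 * RCLike.re (inner 𝕜 (f' x) (f x) : 𝕜) ≤ 0 := by nlinarith
      have he : (0:ℝ) < Real.exp (2*ω*x) := Real.exp_pos _
      nlinarith
  have hga : g a ≤ g 0 := hanti (Set.left_mem_Icc.2 ha.le) (Set.right_mem_Icc.2 ha.le) ha.le
  have hg0 : g 0 = ‖f 0‖^2 := by simp [hg]
  have hkey : (‖f a‖)^2 ≤ (Real.exp (-ω*a) * ‖f 0‖)^2 := by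
    have hga' : Real.exp (2*ω*a) * ‖f a‖^2 ≤ ‖f 0‖^2 := by rw [← hg0]; exact hga
    have he : (0:ℝ) < Real.exp (2*ω*a) := Real.exp_pos _
    have h2 : (Real.exp (-ω*a))^2 = (Real.exp (2*ω*a))⁻¹ := by
      rw [sq, ← Real.exp_add, ← Real.exp_neg]; ring_nf
    have hmain : ‖f a‖^2 ≤ (Real.exp (2*ω*a))⁻¹ * ‖f 0‖^2 := by
      rw [← mul_le_mul_iff_right₀ he, ← mul_assoc, mul_inv_cancel₀ he.ne', one_mul]
      exact hga'
    rw [mul_pow, h2]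
    exact hmain
  have h0 : 0 ≤ Real.exp (-ω*a) * ‖f 0‖ := by positivity
  exact (pow_le_pow_iff_left₀ (norm_nonneg _) h0 two_ne_zero).1 hkey


/-- Asymptotic convergence of the iterative observer's state estimation error over
iterations of the space-like variable: in a real or complex Hilbert space `H`, if each
`e_m : [0, a] → H` (`m ≥ 1`) is differentiable with
`Re⟨e_m'(x), e_m(x)⟩ ≤ −ω·‖e_m(x)‖²` on `[0, a]`, and `e_m(0) = e_{m−1}(a)` for `m ≥ 2`,
then `‖e_m(a)‖ ≤ e^{−mωa}·‖e₁(0)‖` for all `m ≥ 1`; in particular `e_m(a) → 0`. -/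
theorem stmt11 {𝕜 : Type*} [RCLike 𝕜] {H : Type*} [NormedAddCommGroup H]
    [InnerProductSpace 𝕜 H] [CompleteSpace H]
    [NormedSpace ℝ H] [IsScalarTower ℝ 𝕜 H]
    (a ω : ℝ) (ha : 0 < a) (hω : 0 < ω) (e : ℕ → ℝ → H) (e' : ℕ → ℝ → H)
    (hderiv : ∀ m : ℕ, 1 ≤ m → ∀ x ∈ Set.Icc (0:ℝ) a,
      HasDerivWithinAt (e m) (e' m x) (Set.Icc 0 a) x)
    (hdiss : ∀ m : ℕ, 1 ≤ m → ∀ x ∈ Set.Icc (0:ℝ) a,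
      RCLike.re (inner 𝕜 (e' m x) (e m x) : 𝕜) ≤ -ω * ‖e m x‖^2)
    (hconcat : ∀ m : ℕ, 2 ≤ m → e m 0 = e (m - 1) a) :
    (∀ m : ℕ, 1 ≤ m → ‖e m a‖ ≤ Real.exp (-(m:ℝ) * ω * a) * ‖e 1 0‖) ∧
    Tendsto (fun m : ℕ => e m a) atTop (nhds 0) := by
  have pass : ∀ m, 1 ≤ m → ‖e m a‖ ≤ Real.exp (-ω*a) * ‖e m 0‖ := fun m hm =>
    pass_decay (𝕜 := 𝕜) a ω ha (e m) (e' m) (hderiv m hm) (hdiss m hm)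
  have main : ∀ m : ℕ, 1 ≤ m → ‖e m a‖ ≤ Real.exp (-(m:ℝ) * ω * a) * ‖e 1 0‖ := by
    intro m hm
    induction m with
    | zero => omega
    | succ n ih =>
      rcases Nat.lt_or_ge n 1 with h1 | hn
      · have : n = 0 := by omega
        subst this
        have := pass 1 le_rfl
        convert this using 3
        push_cast; ring
      · have h2 : 2 ≤ n + 1 := by omega
        have hp := pass (n+1) (by omega)
        have hc : e (n+1) 0 = e n a := by simpa using hconcat (n+1) h2
        rw [hc] at hp
        have hih := ih hn
        calc ‖e (n+1) a‖ ≤ Real.exp (-ω*a) * ‖e n a‖ := hp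
          _ ≤ Real.exp (-ω*a) * (Real.exp (-(n:ℝ)*ω*a) * ‖e 1 0‖) := by
              exact mul_le_mul_of_nonneg_left hih (Real.exp_nonneg _)
          _ = Real.exp (-((n:ℕ)+1:ℝ)*ω*a) * ‖e 1 0‖ := by
              rw [← mul_assoc, ← Real.exp_add]; ring_nf
          _ = Real.exp (-(((n:ℕ)+1:ℕ):ℝ)*ω*a) * ‖e 1 0‖ := by push_cast; ring_nf
  refine ⟨main, ?_⟩
  rw [tendsto_zero_iff_norm_tendsto_zero]
  have hgeo : Tendsto (fun m : ℕ => Real.exp (-(m:ℝ)*ω*a) * ‖e 1 0‖) atTop (nhds 0) := by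
    have heq : (fun m : ℕ => Real.exp (-(m:ℝ)*ω*a)) = fun m : ℕ => (Real.exp (-(ω*a)))^m := by
      funext m
      rw [← Real.exp_nat_mul]
      ring_nf
    have h1 : Tendsto (fun m : ℕ => Real.exp (-(m:ℝ)*ω*a)) atTop (nhds 0) := by
      rw [heq]
      exact tendsto_pow_atTop_nhds_zero_of_lt_one (Real.exp_nonneg _)
        (Real.exp_lt_one_iff.2 (by nlinarith))
    simpa using h1.mul_const ‖e 1 0‖
  apply squeeze_zero' (Filter.Eventually.of_forall fun m => norm_nonneg _) ?_ hgeo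
  filter_upwards [eventually_ge_atTop 1] with m hm using main m hm
end
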